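/- Let F : ℝⁿ → ℝ be F(x) = Σᵢ (1+νᵢ)·log(1 + (cᵢᵀx - yᵢ)²/(νᵢ σᵢ²)) where νᵢ, σᵢ > 0, cᵢ ∈ ℝⁿ, yᵢ ∈ ℝ. Then the gradient of F is Lipschitz continuous with constant L = 2·Σᵢ ((νᵢ+1)/(νᵢ σᵢ²))·‖cᵢ‖². -/

import Mathlib

open RealInnerProductSpace

/-- The scalar map `s ↦ s / (a + s²)` is `(1/a)`-Lipschitz for `a > 0`. -/
lemma frac_lip (a s₁ s₂ : ℝ) (ha : 0 < a) :
    |s₁ / (a + s₁ ^ 2) - s₂ / (a + s₂ ^ 2)| ≤ (1 / a) * |s₁ - s₂| := by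
  have d₁ : (0:ℝ) < a + s₁ ^ 2 := by positivity
  have d₂ : (0:ℝ) < a + s₂ ^ 2 := by positivity
  have key : s₁ / (a + s₁ ^ 2) - s₂ / (a + s₂ ^ 2)
      = ((s₁ - s₂) * (a - s₁ * s₂)) / ((a + s₁ ^ 2) * (a + s₂ ^ 2)) := by
    field_simp; ring
  rw [key, abs_div, abs_mul,
    abs_of_pos (show (0:ℝ) < (a + s₁ ^ 2) * (a + s₂ ^ 2) by positivity)]
  rw [div_le_iff₀ (by positivity)]
  have h1 : |a - s₁ * s₂| * a ≤ (a + s₁ ^ 2) * (a + s₂ ^ 2) := by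
    rcases abs_cases (a - s₁ * s₂) with ⟨h, _⟩ | ⟨h, _⟩ <;> rw [h] <;>
      nlinarith [sq_nonneg (s₁ - s₂), sq_nonneg (s₁ + s₂), sq_nonneg (s₁ * s₂)]
  have h2 := mul_le_mul_of_nonneg_left h1 (abs_nonneg (s₁ - s₂))
  have h3 : 1 / a * |s₁ - s₂| * ((a + s₁ ^ 2) * (a + s₂ ^ 2))
      = (|s₁ - s₂| * ((a + s₁ ^ 2) * (a + s₂ ^ 2))) / a := by ring
  rw [h3, le_div_iff₀ ha]
  nlinarith [h2]

/-- Lipschitz estimate for `g t = 2(1+ν)(t-y)/(a + (t-y)²)`. -/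
lemma g_lip (a ν y t₁ t₂ : ℝ) (ha : 0 < a) (hν : 0 < ν) :
    |2 * (1 + ν) * (t₁ - y) / (a + (t₁ - y) ^ 2)
      - 2 * (1 + ν) * (t₂ - y) / (a + (t₂ - y) ^ 2)|
      ≤ (2 * (1 + ν) / a) * |t₁ - t₂| := by
  have hc : (0:ℝ) ≤ 2 * (1 + ν) := by linarith
  have h := frac_lip a (t₁ - y) (t₂ - y) ha
  have he : 2 * (1 + ν) * (t₁ - y) / (a + (t₁ - y) ^ 2)
      - 2 * (1 + ν) * (t₂ - y) / (a + (t₂ - y) ^ 2)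
      = 2 * (1 + ν) * ((t₁ - y) / (a + (t₁ - y) ^ 2) - (t₂ - y) / (a + (t₂ - y) ^ 2)) := by
    ring
  have ht : t₁ - y - (t₂ - y) = t₁ - t₂ := by ring
  rw [he, abs_mul, abs_of_nonneg hc]
  calc 2 * (1 + ν) * |(t₁ - y) / (a + (t₁ - y) ^ 2) - (t₂ - y) / (a + (t₂ - y) ^ 2)|
      ≤ 2 * (1 + ν) * (1 / a * |t₁ - y - (t₂ - y)|) := by
        exact mul_le_mul_of_nonneg_left h hc
    _ = (2 * (1 + ν) / a) * |t₁ - t₂| := by rw [ht]; ring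

/-- Derivative of `t ↦ (1+ν) log(1 + (t-y)²/a)`. -/
lemma phi_deriv (a ν y t : ℝ) (ha : 0 < a) :
    HasDerivAt (fun t => (1 + ν) * Real.log (1 + (t - y) ^ 2 / a))
      (2 * (1 + ν) * (t - y) / (a + (t - y) ^ 2)) t := by
  have hu : HasDerivAt (fun t : ℝ => 1 + (t - y) ^ 2 / a) (2 * (t - y) / a) t := by
    have h1 : HasDerivAt (fun t : ℝ => (t - y) ^ 2) (2 * (t - y)) t := by
      simpa using ((hasDerivAt_id t).sub_const y).fun_pow 2
    simpa [mul_comm, mul_div_assoc] using (h1.div_const a).const_add 1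
  have hpos : (0:ℝ) < 1 + (t - y) ^ 2 / a := by positivity
  have hlog := (hu.log (ne_of_gt hpos)).const_mul (1 + ν)
  refine hlog.congr_deriv ?_
  field_simp

theorem studentT_gradient_lipschitz (n m : ℕ) (ν σ : Fin m → ℝ)
    (hν : ∀ i, 0 < ν i) (hσ : ∀ i, 0 < σ i)
    (c : Fin m → EuclideanSpace ℝ (Fin n)) (y : Fin m → ℝ)
    (F : EuclideanSpace ℝ (Fin n) → ℝ)
    (hF : F = fun x => ∑ i, (1 + ν i) * Real.log (1 + (⟪c i, x⟫ - y i) ^ 2 / (ν i * σ i ^ 2))) :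
    ∀ x₁ x₂ : EuclideanSpace ℝ (Fin n),
      ‖gradient F x₁ - gradient F x₂‖
        ≤ (2 * ∑ i, ((ν i + 1) / (ν i * σ i ^ 2)) * ‖c i‖ ^ 2) * ‖x₁ - x₂‖ := by
  set a : Fin m → ℝ := fun i => ν i * σ i ^ 2 with ha_def
  have ha : ∀ i, 0 < a i := fun i => by
    have := hν i; have := hσ i; positivity
  set g : Fin m → ℝ → ℝ := fun i t => 2 * (1 + ν i) * (t - y i) / (a i + (t - y i) ^ 2)
    with hg_def
  set G : EuclideanSpace ℝ (Fin n) → EuclideanSpace ℝ (Fin n) := fun x => ∑ i, g i ⟪c i, x⟫ • c i with hG_def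
  -- gradient computation
  have hgrad : ∀ x : EuclideanSpace ℝ (Fin n), gradient F x = G x := by
    intro x
    have hf : HasFDerivAt F (∑ i, g i ⟪c i, x⟫ • (innerSL ℝ (c i))) x := by
      rw [hF]
      refine HasFDerivAt.fun_sum fun i _ => ?_
      have hin : HasFDerivAt (fun x : EuclideanSpace ℝ (Fin n) => ⟪c i, x⟫) (innerSL ℝ (c i)) x :=
        (innerSL ℝ (c i)).hasFDerivAt
      exact (phi_deriv (a i) (ν i) (y i) ⟪c i, x⟫ (ha i)).comp_hasFDerivAt x hin
    have heq : (InnerProductSpace.toDual ℝ (EuclideanSpace ℝ (Fin n))) (G x)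
        = ∑ i, g i ⟪c i, x⟫ • (innerSL ℝ (c i)) := by
      ext v
      simp [hG_def, InnerProductSpace.toDual_apply_apply, sum_inner, real_inner_smul_left]
    have hG : HasGradientAt F (G x) x := by
      rw [hasGradientAt_iff_hasFDerivAt, heq]; exact hf
    exact hG.gradient
  intro x₁ x₂
  rw [hgrad x₁, hgrad x₂]
  have hsub : G x₁ - G x₂ = ∑ i, (g i ⟪c i, x₁⟫ - g i ⟪c i, x₂⟫) • c i := by
    simp [hG_def, ← Finset.sum_sub_distrib, sub_smul]
  rw [hsub]
  calc ‖∑ i, (g i ⟪c i, x₁⟫ - g i ⟪c i, x₂⟫) • c i‖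
      ≤ ∑ i, ‖(g i ⟪c i, x₁⟫ - g i ⟪c i, x₂⟫) • c i‖ := norm_sum_le _ _
    _ ≤ ∑ i, (2 * ((ν i + 1) / (a i)) * ‖c i‖ ^ 2) * ‖x₁ - x₂‖ := by
        refine Finset.sum_le_sum fun i _ => ?_
        rw [norm_smul, Real.norm_eq_abs]
        have h1 : |g i ⟪c i, x₁⟫ - g i ⟪c i, x₂⟫|
            ≤ (2 * (1 + ν i) / a i) * |⟪c i, x₁⟫ - ⟪c i, x₂⟫| :=
          g_lip (a i) (ν i) (y i) _ _ (ha i) (hν i)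
        have h2 : |⟪c i, x₁⟫ - ⟪c i, x₂⟫| ≤ ‖c i‖ * ‖x₁ - x₂‖ := by
          have : ⟪c i, x₁⟫ - ⟪c i, x₂⟫ = ⟪c i, x₁ - x₂⟫ := (inner_sub_right _ _ _).symm
          rw [this]
          exact abs_real_inner_le_norm _ _
        have hL : (0:ℝ) ≤ 2 * (1 + ν i) / a i := by
          have := hν i; have := ha i; positivity
        calc |g i ⟪c i, x₁⟫ - g i ⟪c i, x₂⟫| * ‖c i‖
            ≤ ((2 * (1 + ν i) / a i) * (‖c i‖ * ‖x₁ - x₂‖)) * ‖c i‖ := by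
              refine mul_le_mul_of_nonneg_right ?_ (norm_nonneg _)
              exact h1.trans (mul_le_mul_of_nonneg_left h2 hL)
          _ = (2 * ((ν i + 1) / (a i)) * ‖c i‖ ^ 2) * ‖x₁ - x₂‖ := by ring
    _ = (2 * ∑ i, ((ν i + 1) / (ν i * σ i ^ 2)) * ‖c i‖ ^ 2) * ‖x₁ - x₂‖ := by
        rw [Finset.mul_sum, Finset.sum_mul]
        exact Finset.sum_congr rfl fun i _ => by rw [ha_def]; ring
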